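/- Let W be a finite-dimensional real inner product space. For every alternating bilinear map T : W × W → W there exists a unique linear map ω : W → so(W) such that ω(x)y − ω(y)x = T(x, y) for all x, y ∈ W. -/

import Mathlib

open RealInnerProductSpace

section KoszulAux
variable {W : Type*} [NormedAddCommGroup W] [InnerProductSpace ℝ W] [FiniteDimensional ℝ W]

omit [NormedAddCommGroup W] [InnerProductSpace ℝ W] [FiniteDimensional ℝ W] in
private lemma upd0 (a b y : W) : Function.update ![a, y] 0 b = ![b, y] := by
  funext i; fin_cases i <;> simp

omit [NormedAddCommGroup W] [InnerProductSpace ℝ W] [FiniteDimensional ℝ W] in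
private lemma upd1 (x a b : W) : Function.update ![x, a] 1 b = ![x, b] := by
  funext i; fin_cases i <;> simp

variable (T : W [⋀^Fin 2]→ₗ[ℝ] W)

omit [FiniteDimensional ℝ W] in
private lemma Tswap (x y : W) : T ![y, x] = - T ![x, y] := by
  have h := T.map_swap ![x, y] (i := 0) (j := 1) (by decide)
  have e : (![x, y] ∘ Equiv.swap (0 : Fin 2) 1) = ![y, x] := by
    funext i; fin_cases i <;> simp [Equiv.swap_apply_left, Equiv.swap_apply_right]
  rw [e] at h; exact h

private noncomputable def Tbil : W →ₗ[ℝ] W →ₗ[ℝ] W :=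
  LinearMap.mk₂ ℝ (fun x y => T ![x, y])
    (fun x x' y => by have h := T.map_update_add ![x, y] 0 x x'; rwa [upd0, upd0, upd0] at h)
    (fun c x y => by have h := T.map_update_smul ![x, y] 0 c x; rwa [upd0, upd0] at h)
    (fun x y y' => by have h := T.map_update_add ![x, y] 1 y y'; rwa [upd1, upd1, upd1] at h)
    (fun c x y => by have h := T.map_update_smul ![x, y] 1 c y; rwa [upd1, upd1] at h)

private noncomputable def Ffun (x y : W) : W →ₗ[ℝ] ℝ where
  toFun z := (⟪Tbil T x y, z⟫ - ⟪Tbil T y z, x⟫ + ⟪Tbil T z x, y⟫) / 2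
  map_add' z z' := by
    simp [inner_add_right, map_add, inner_add_left, LinearMap.add_apply]; ring
  map_smul' c z := by
    simp [real_inner_smul_right, map_smul, real_inner_smul_left, LinearMap.smul_apply]; ring

private noncomputable def omega0 (x y : W) : W :=
  (InnerProductSpace.toDual ℝ W).symm (LinearMap.toContinuousLinearMap (Ffun T x y))

private lemma inner_omega0 (x y z : W) :
    ⟪omega0 T x y, z⟫ = (⟪Tbil T x y, z⟫ - ⟪Tbil T y z, x⟫ + ⟪Tbil T z x, y⟫) / 2 := by
  rw [omega0, InnerProductSpace.toDual_symm_apply]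
  rfl

private noncomputable def omegaMap : W →ₗ[ℝ] W →ₗ[ℝ] W :=
  LinearMap.mk₂ ℝ (omega0 T)
    (fun x x' y => by
      apply ext_inner_right ℝ; intro z
      simp [inner_omega0, inner_add_left, inner_add_right, map_add, LinearMap.add_apply]
      ring)
    (fun c x y => by
      apply ext_inner_right ℝ; intro z
      simp [inner_omega0, real_inner_smul_left, real_inner_smul_right, map_smul,
        LinearMap.smul_apply]
      ring)
    (fun x y y' => by
      apply ext_inner_right ℝ; intro z
      simp [inner_omega0, inner_add_left, inner_add_right, map_add, LinearMap.add_apply]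
      ring)
    (fun c x y => by
      apply ext_inner_right ℝ; intro z
      simp [inner_omega0, real_inner_smul_left, real_inner_smul_right, map_smul,
        LinearMap.smul_apply]
      ring)

end KoszulAux

/-- For every alternating bilinear map `T : W × W → W` on a finite-dimensional real inner
product space `W` there is a unique linear map `ω : W → 𝔰𝔬(W)` (values skew-adjoint) with
`ω x y − ω y x = T (x, y)` for all `x, y`. -/
theorem existsUnique_so_valued_solution
    (W : Type*) [NormedAddCommGroup W] [InnerProductSpace ℝ W] [FiniteDimensional ℝ W]
    (T : W [⋀^Fin 2]→ₗ[ℝ] W) :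
    ∃! ω : W →ₗ[ℝ] (W →ₗ[ℝ] W),
      (∀ x u v : W, ⟪ω x u, v⟫ = - ⟪u, ω x v⟫) ∧
      (∀ x y : W, ω x y - ω y x = T ![x, y]) := by
  have hTb : ∀ x y : W, Tbil T x y = T ![x, y] := fun _ _ => rfl
  have hfor : ∀ x y z : W,
      ⟪omegaMap T x y, z⟫ = (⟪T ![x, y], z⟫ - ⟪T ![y, z], x⟫ + ⟪T ![z, x], y⟫) / 2 := by
    intro x y z
    have := inner_omega0 T x y z
    rw [show omegaMap T x y = omega0 T x y from rfl]
    simpa [hTb] using this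
  refine ⟨omegaMap T, ⟨?_, ?_⟩, ?_⟩
  · -- skew-adjointness
    intro x u v
    rw [real_inner_comm ((omegaMap T x) v) u, hfor, hfor, Tswap T x u, Tswap T u v, Tswap T v x]
    simp [inner_neg_left]
    ring
  · -- torsion identity
    intro x y
    apply ext_inner_right ℝ; intro z
    rw [inner_sub_left, hfor, hfor, Tswap T x y, Tswap T z x, Tswap T y z]
    simp [inner_neg_left]
    ring
  · -- uniqueness
    intro ω' ⟨h1, h2⟩
    apply LinearMap.ext; intro x
    apply LinearMap.ext; intro y
    apply ext_inner_right ℝ; intro z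
    rw [hfor]
    have e1 : ⟪ω' y x, z⟫ = -⟪ω' y z, x⟫ := by rw [h1 y x z, real_inner_comm]
    have e2 : ⟪ω' z y, x⟫ = -⟪ω' z x, y⟫ := by rw [h1 z y x, real_inner_comm]
    have e3 : ⟪ω' x z, y⟫ = -⟪ω' x y, z⟫ := by rw [h1 x z y, real_inner_comm]
    have t1 : ⟪T ![x, y], z⟫ = ⟪ω' x y, z⟫ - ⟪ω' y x, z⟫ := by
      rw [← h2 x y, inner_sub_left]
    have t2 : ⟪T ![y, z], x⟫ = ⟪ω' y z, x⟫ - ⟪ω' z y, x⟫ := by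
      rw [← h2 y z, inner_sub_left]
    have t3 : ⟪T ![z, x], y⟫ = ⟪ω' z x, y⟫ - ⟪ω' x z, y⟫ := by
      rw [← h2 z x, inner_sub_left]
    linarith
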